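/- The estimate of Theorem 2.1 is sharp for the Laplacian in terms of the asymptotics in h as h → 0. Concretely, fix a < b and for h > 0 let R_h = (0,h) × (a,b) and define u_h(x₁,x₂) = cosh( (π/(b−a))(x₁ − h/2) )·sin( π(x₂ − a)/(b−a) ). Then u_h is harmonic in R_h and vanishes on (0,h)×{a,b}, and there exist constants c > 0 and h₀ > 0, independent of h, such that for all 0 < h < h₀ one has ‖∇u_h‖²_{L²(R_h)} ≥ c( ‖u_h‖_{L²(R_h)}·‖∂_{x₁}u_h‖_{L²(R_h)}/h + ‖∂_{x₁}u_h‖²_{L²(R_h)} ), so the inequality ‖∇u‖² ≤ C( ‖u‖·‖u_{x₁}‖/h + ‖u_{x₁}‖² ) cannot hold with a constant tending to 0 as h → 0. -/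

import Mathlib

open MeasureTheory Set Real

/-- Partial derivative in the first (thin) direction of a function on `ℝ² = ℝ × ℝ`. -/
noncomputable def d₁ (f : ℝ × ℝ → ℝ) (p : ℝ × ℝ) : ℝ := fderiv ℝ f p (1, 0)

/-- Partial derivative in the second direction. -/
noncomputable def d₂ (f : ℝ × ℝ → ℝ) (p : ℝ × ℝ) : ℝ := fderiv ℝ f p (0, 1)

/-- The Laplacian of a function on `ℝ²`. -/
noncomputable def lap (f : ℝ × ℝ → ℝ) (p : ℝ × ℝ) : ℝ :=
  fderiv ℝ (fun q => d₁ f q) p (1, 0) + fderiv ℝ (fun q => d₂ f q) p (0, 1)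

/-- The Ansatz `u_h(x₁,x₂) = cosh((π/(b-a))(x₁ - h/2)) · sin(π(x₂-a)/(b-a))`. -/
noncomputable def ansatz (a b h : ℝ) (p : ℝ × ℝ) : ℝ :=
  Real.cosh (Real.pi / (b - a) * (p.1 - h / 2)) * Real.sin (Real.pi * (p.2 - a) / (b - a))

lemma d₁_mul {f g : ℝ → ℝ} {f' g' : ℝ} {p : ℝ × ℝ}
    (hf : HasDerivAt f f' p.1) (hg : HasDerivAt g g' p.2) :
    d₁ (fun q : ℝ × ℝ => f q.1 * g q.2) p = f' * g p.2 := by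
  have h3 : HasFDerivAt (fun q : ℝ × ℝ => f q.1 * g q.2) _ p :=
    (hf.hasFDerivAt.comp p hasFDerivAt_fst).mul (hg.hasFDerivAt.comp p hasFDerivAt_snd)
  rw [d₁, h3.fderiv]
  simp [Function.comp]
  ring

lemma d₂_mul {f g : ℝ → ℝ} {f' g' : ℝ} {p : ℝ × ℝ}
    (hf : HasDerivAt f f' p.1) (hg : HasDerivAt g g' p.2) :
    d₂ (fun q : ℝ × ℝ => f q.1 * g q.2) p = f p.1 * g' := by
  have h3 : HasFDerivAt (fun q : ℝ × ℝ => f q.1 * g q.2) _ p :=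
    (hf.hasFDerivAt.comp p hasFDerivAt_fst).mul (hg.hasFDerivAt.comp p hasFDerivAt_snd)
  rw [d₂, h3.fderiv]
  simp [Function.comp]

lemma sinh_le_mul_cosh {t : ℝ} (ht : 0 ≤ t) : Real.sinh t ≤ t * Real.cosh t := by
  have key : ∀ x : ℝ, HasDerivAt (fun s => s * Real.cosh s - Real.sinh s) (x * Real.sinh x) x := by
    intro x
    have := ((hasDerivAt_id x).mul (Real.hasDerivAt_cosh x)).sub (Real.hasDerivAt_sinh x)
    refine this.congr_deriv ?_
    simp [id_def, mul_comm]
  have mono : MonotoneOn (fun s => s * Real.cosh s - Real.sinh s) (Set.Ici 0) := by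
    apply monotoneOn_of_deriv_nonneg (convex_Ici 0)
    · exact ((continuous_id.mul Real.continuous_cosh).sub Real.continuous_sinh).continuousOn
    · exact fun x _ => (key x).differentiableAt.differentiableWithinAt
    · intro x hx
      rw [(key x).deriv]
      simp only [interior_Ici, Set.mem_Ioi] at hx
      have : (0:ℝ) ≤ Real.sinh x := by simpa using Real.sinh_le_sinh.2 hx.le
      exact mul_nonneg hx.le this
  have := mono (Set.self_mem_Ici) ht ht
  simp at this
  linarith

lemma sinh_sq_le (t : ℝ) : Real.sinh t ^ 2 ≤ t ^ 2 * Real.cosh t ^ 2 := by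
  rcases le_or_gt 0 t with ht | ht
  · have h1 := sinh_le_mul_cosh ht
    have h2 : (0:ℝ) ≤ Real.sinh t := by simpa using Real.sinh_le_sinh.2 ht
    nlinarith
  · have ht' : 0 ≤ -t := by linarith
    have h1 := sinh_le_mul_cosh ht'
    have h2 : (0:ℝ) ≤ Real.sinh (-t) := by simpa using Real.sinh_le_sinh.2 ht'
    simp only [Real.sinh_neg, Real.cosh_neg] at h1 h2
    nlinarith

lemma hasDerivAt_cosh_aff (k c x : ℝ) :
    HasDerivAt (fun x => Real.cosh (k * (x - c))) (Real.sinh (k * (x - c)) * k) x := by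
  have : HasDerivAt (fun x => k * (x - c)) k x := by
    simpa using ((hasDerivAt_id x).sub_const c).const_mul k
  exact this.cosh

lemma hasDerivAt_sinh_aff (k c x : ℝ) :
    HasDerivAt (fun x => Real.sinh (k * (x - c))) (Real.cosh (k * (x - c)) * k) x := by
  have : HasDerivAt (fun x => k * (x - c)) k x := by
    simpa using ((hasDerivAt_id x).sub_const c).const_mul k
  exact this.sinh

lemma hasDerivAt_sin_aff (k c x : ℝ) :
    HasDerivAt (fun x => Real.sin (k * (x - c))) (Real.cos (k * (x - c)) * k) x := by
  have : HasDerivAt (fun x => k * (x - c)) k x := by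
    simpa using ((hasDerivAt_id x).sub_const c).const_mul k
  exact this.sin

lemma hasDerivAt_cos_aff (k c x : ℝ) :
    HasDerivAt (fun x => Real.cos (k * (x - c))) (-Real.sin (k * (x - c)) * k) x := by
  have : HasDerivAt (fun x => k * (x - c)) k x := by
    simpa using ((hasDerivAt_id x).sub_const c).const_mul k
  exact this.cos

lemma ansatz_eq (a b h : ℝ) :
    ansatz a b h = fun p : ℝ × ℝ =>
      Real.cosh (Real.pi / (b - a) * (p.1 - h / 2)) *
        Real.sin (Real.pi / (b - a) * (p.2 - a)) := by
  funext p
  unfold ansatz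
  congr 2
  ring

lemma contIntegOn {f : ℝ → ℝ} (hf : Continuous f) (c d : ℝ) :
    IntegrableOn f (Set.Ioo c d) :=
  (hf.integrableOn_Icc).mono_set Set.Ioo_subset_Icc_self

lemma prod_sq_int (F G : ℝ → ℝ) (s t : Set ℝ) :
    ∫ p in s ×ˢ t, (F p.1 * G p.2) ^ 2 = (∫ x in s, F x ^ 2) * ∫ y in t, G y ^ 2 := by
  simp_rw [mul_pow]
  rw [MeasureTheory.Measure.volume_eq_prod ℝ ℝ]
  exact MeasureTheory.setIntegral_prod_mul (fun x => F x ^ 2) (fun y => G y ^ 2) s t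

lemma prod_integrableOn {F G : ℝ → ℝ} (hF : Continuous F) (hG : Continuous G)
    (c d e f : ℝ) :
    IntegrableOn (fun p : ℝ × ℝ => (F p.1 * G p.2) ^ 2) (Set.Ioo c d ×ˢ Set.Ioo e f) := by
  rw [IntegrableOn, MeasureTheory.Measure.volume_eq_prod ℝ ℝ, ← Measure.prod_restrict]
  simp_rw [mul_pow]
  exact (contIntegOn (hF.pow 2) c d).mul_prod (contIntegOn (hG.pow 2) e f)

lemma final_arith (A B₁ S C₁ k h : ℝ) (hh : 0 < h) (hA0 : 0 ≤ A) (hB0 : 0 ≤ B₁)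
    (hS0 : 0 ≤ S) (hC₁ : C₁ = S * k ^ 2) (hBA : B₁ ≤ (k ^ 2 * h) ^ 2 * A) :
    1 * (Real.sqrt (A * S) * Real.sqrt (B₁ * S) / h + B₁ * S) ≤ B₁ * S + A * C₁ := by
  rw [one_mul, hC₁]
  have e1 : Real.sqrt (A * S) * Real.sqrt (B₁ * S) = Real.sqrt (A * B₁) * S := by
    rw [← Real.sqrt_mul (mul_nonneg hA0 hS0),
      show (A * S) * (B₁ * S) = (A * B₁) * S ^ 2 by ring,
      Real.sqrt_mul (mul_nonneg hA0 hB0), Real.sqrt_sq hS0]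
  have e2 : Real.sqrt (A * B₁) ≤ k ^ 2 * h * A := by
    have h1 : A * B₁ ≤ (k ^ 2 * h * A) ^ 2 := by nlinarith
    calc Real.sqrt (A * B₁) ≤ Real.sqrt ((k ^ 2 * h * A) ^ 2) := Real.sqrt_le_sqrt h1
      _ = k ^ 2 * h * A := Real.sqrt_sq (by positivity)
  have e3 : Real.sqrt (A * B₁) * S ≤ (k ^ 2 * h * A) * S :=
    mul_le_mul_of_nonneg_right e2 hS0
  have e4 : Real.sqrt (A * S) * Real.sqrt (B₁ * S) / h ≤ (k ^ 2 * h * A) * S / h := by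
    rw [e1]
    exact div_le_div_of_nonneg_right e3 hh.le
  have e5 : (k ^ 2 * h * A) * S / h = A * (S * k ^ 2) := by
    field_simp
  linarith [e4, e5.symm.le]

/-- **Theorem 2.3, first part**: sharpness of the gradient separation estimate (2.3) for the
Laplacian.  On `R_h = (0,h) × (a,b)` the Ansatz `u_h` is harmonic, vanishes on
`(0,h) × {a,b}`, and there are `c > 0`, `h₀ > 0` independent of `h` such that for all
`0 < h < h₀` the reverse estimate
`‖∇u_h‖² ≥ c (‖u_h‖·‖∂_{x₁}u_h‖/h + ‖∂_{x₁}u_h‖²)` holds, so (2.3) is optimal as `h → 0`. -/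
theorem gradient_separation_sharp (a b : ℝ) (hab : a < b) :
    (∀ h : ℝ, 0 < h → ∀ p ∈ Set.Ioo 0 h ×ˢ Set.Ioo a b, lap (ansatz a b h) p = 0) ∧
    (∀ h : ℝ, 0 < h → ∀ x ∈ Set.Ioo 0 h,
      ansatz a b h (x, a) = 0 ∧ ansatz a b h (x, b) = 0) ∧
    ∃ c : ℝ, 0 < c ∧ ∃ h₀ : ℝ, 0 < h₀ ∧ ∀ h : ℝ, 0 < h → h < h₀ →
      c * (Real.sqrt (∫ p in Set.Ioo 0 h ×ˢ Set.Ioo a b, (ansatz a b h p) ^ 2) *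
            Real.sqrt (∫ p in Set.Ioo 0 h ×ˢ Set.Ioo a b, (d₁ (ansatz a b h) p) ^ 2) / h +
          ∫ p in Set.Ioo 0 h ×ˢ Set.Ioo a b, (d₁ (ansatz a b h) p) ^ 2) ≤
        ∫ p in Set.Ioo 0 h ×ˢ Set.Ioo a b,
          ((d₁ (ansatz a b h) p) ^ 2 + (d₂ (ansatz a b h) p) ^ 2) := by
  have hL : 0 < b - a := sub_pos.mpr hab
  obtain ⟨k, hk, hkb, hA⟩ : ∃ k : ℝ, 0 < k ∧ k * (b - a) = Real.pi ∧
      ∀ h : ℝ, ansatz a b h = fun p : ℝ × ℝ =>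
        Real.cosh (k * (p.1 - h / 2)) * Real.sin (k * (p.2 - a)) :=
    ⟨Real.pi / (b - a), div_pos Real.pi_pos hL, div_mul_cancel₀ _ hL.ne',
      fun h => ansatz_eq a b h⟩
  have hd1 : ∀ h : ℝ, d₁ (ansatz a b h) = fun q : ℝ × ℝ =>
      Real.sinh (k * (q.1 - h / 2)) * k * Real.sin (k * (q.2 - a)) := by
    intro h
    funext q
    rw [hA h]
    exact d₁_mul (f := fun x => Real.cosh (k * (x - h / 2)))
      (g := fun y => Real.sin (k * (y - a)))
      (hasDerivAt_cosh_aff k (h / 2) q.1) (hasDerivAt_sin_aff k a q.2)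
  have hd2 : ∀ h : ℝ, d₂ (ansatz a b h) = fun q : ℝ × ℝ =>
      Real.cosh (k * (q.1 - h / 2)) * (Real.cos (k * (q.2 - a)) * k) := by
    intro h
    funext q
    rw [hA h]
    exact d₂_mul (f := fun x => Real.cosh (k * (x - h / 2)))
      (g := fun y => Real.sin (k * (y - a)))
      (hasDerivAt_cosh_aff k (h / 2) q.1) (hasDerivAt_sin_aff k a q.2)
  refine ⟨?_, ?_, ?_⟩
  · -- harmonicity
    intro h hh p hp
    have t1 : d₁ (fun q : ℝ × ℝ =>
        Real.sinh (k * (q.1 - h / 2)) * k * Real.sin (k * (q.2 - a))) p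
        = Real.cosh (k * (p.1 - h / 2)) * k * k * Real.sin (k * (p.2 - a)) :=
      d₁_mul (f := fun x => Real.sinh (k * (x - h / 2)) * k)
        (g := fun y => Real.sin (k * (y - a)))
        ((hasDerivAt_sinh_aff k (h / 2) p.1).mul_const k) (hasDerivAt_sin_aff k a p.2)
    have t2 : d₂ (fun q : ℝ × ℝ =>
        Real.cosh (k * (q.1 - h / 2)) * (Real.cos (k * (q.2 - a)) * k)) p
        = Real.cosh (k * (p.1 - h / 2)) * (-Real.sin (k * (p.2 - a)) * k * k) :=
      d₂_mul (f := fun x => Real.cosh (k * (x - h / 2)))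
        (g := fun y => Real.cos (k * (y - a)) * k)
        (hasDerivAt_cosh_aff k (h / 2) p.1) ((hasDerivAt_cos_aff k a p.2).mul_const k)
    rw [d₁] at t1
    rw [d₂] at t2
    rw [lap]
    rw [show (fun q => d₁ (ansatz a b h) q) = fun q : ℝ × ℝ =>
      Real.sinh (k * (q.1 - h / 2)) * k * Real.sin (k * (q.2 - a)) from hd1 h]
    rw [show (fun q => d₂ (ansatz a b h) q) = fun q : ℝ × ℝ =>
      Real.cosh (k * (q.1 - h / 2)) * (Real.cos (k * (q.2 - a)) * k) from hd2 h]
    rw [t1, t2]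
    ring
  · -- boundary values
    intro h hh x hx
    have hpa : Real.pi * (a - a) / (b - a) = 0 := by simp
    have hpb : Real.pi * (b - a) / (b - a) = Real.pi := by
      rw [mul_div_assoc, div_self hL.ne', mul_one]
    constructor
    · show Real.cosh _ * Real.sin (Real.pi * ((x, a).2 - a) / (b - a)) = 0
      simp [ansatz]
    · show ansatz a b h (x, b) = 0
      unfold ansatz
      simp only
      rw [hpb, Real.sin_pi, mul_zero]
  · -- the main estimate
    refine ⟨1, one_pos, 1, one_pos, ?_⟩
    intro h hh _
    -- abbreviations
    have contF1 : Continuous fun x => Real.cosh (k * (x - h / 2)) := by fun_prop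
    have contF2 : Continuous fun x => Real.sinh (k * (x - h / 2)) * k := by fun_prop
    have contG1 : Continuous fun y => Real.sin (k * (y - a)) := by fun_prop
    have contG2 : Continuous fun y => Real.cos (k * (y - a)) * k := by fun_prop
    have Iu : ∫ p in Set.Ioo 0 h ×ˢ Set.Ioo a b, (ansatz a b h p) ^ 2
        = (∫ x in Set.Ioo (0:ℝ) h, Real.cosh (k * (x - h / 2)) ^ 2) *
          ∫ y in Set.Ioo a b, Real.sin (k * (y - a)) ^ 2 := by
      simp only [hA h]
      exact prod_sq_int (fun x => Real.cosh (k * (x - h / 2)))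
        (fun y => Real.sin (k * (y - a))) _ _
    have I1 : ∫ p in Set.Ioo 0 h ×ˢ Set.Ioo a b, (d₁ (ansatz a b h) p) ^ 2
        = (∫ x in Set.Ioo (0:ℝ) h, (Real.sinh (k * (x - h / 2)) * k) ^ 2) *
          ∫ y in Set.Ioo a b, Real.sin (k * (y - a)) ^ 2 := by
      simp only [hd1 h]
      exact prod_sq_int (fun x => Real.sinh (k * (x - h / 2)) * k)
        (fun y => Real.sin (k * (y - a))) _ _
    have I2 : ∫ p in Set.Ioo 0 h ×ˢ Set.Ioo a b, (d₂ (ansatz a b h) p) ^ 2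
        = (∫ x in Set.Ioo (0:ℝ) h, Real.cosh (k * (x - h / 2)) ^ 2) *
          ∫ y in Set.Ioo a b, (Real.cos (k * (y - a)) * k) ^ 2 := by
      simp only [hd2 h]
      exact prod_sq_int (fun x => Real.cosh (k * (x - h / 2)))
        (fun y => Real.cos (k * (y - a)) * k) _ _
    have Isplit : ∫ p in Set.Ioo 0 h ×ˢ Set.Ioo a b,
        ((d₁ (ansatz a b h) p) ^ 2 + (d₂ (ansatz a b h) p) ^ 2)
        = (∫ p in Set.Ioo 0 h ×ˢ Set.Ioo a b, (d₁ (ansatz a b h) p) ^ 2) +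
          ∫ p in Set.Ioo 0 h ×ˢ Set.Ioo a b, (d₂ (ansatz a b h) p) ^ 2 := by
      simp only [hd1 h, hd2 h]
      exact MeasureTheory.integral_add
        (prod_integrableOn contF2 contG1 0 h a b)
        (prod_integrableOn contF1 contG2 0 h a b)
    -- S = C
    have hSC : ∫ y in Set.Ioo a b, Real.cos (k * (y - a)) ^ 2
        = ∫ y in Set.Ioo a b, Real.sin (k * (y - a)) ^ 2 := by
      have hint1 : IntegrableOn (fun y => Real.cos (k * (y - a)) ^ 2) (Set.Ioo a b) :=
        contIntegOn (by fun_prop) a b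
      have hint2 : IntegrableOn (fun y => Real.sin (k * (y - a)) ^ 2) (Set.Ioo a b) :=
        contIntegOn (by fun_prop) a b
      have hD : ∫ y in Set.Ioo a b,
          (Real.cos (k * (y - a)) ^ 2 - Real.sin (k * (y - a)) ^ 2) = 0 := by
        rw [← MeasureTheory.integral_Ioc_eq_integral_Ioo,
          ← intervalIntegral.integral_of_le hab.le]
        have hder : ∀ y ∈ Set.uIcc a b,
            HasDerivAt (fun y => Real.sin (k * (y - a)) * Real.cos (k * (y - a)) / k)
              (Real.cos (k * (y - a)) ^ 2 - Real.sin (k * (y - a)) ^ 2) y := by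
          intro y _
          have := ((hasDerivAt_sin_aff k a y).mul (hasDerivAt_cos_aff k a y)).div_const k
          refine this.congr_deriv ?_
          field_simp
          ring
        rw [intervalIntegral.integral_eq_sub_of_hasDerivAt hder
          (by apply Continuous.intervalIntegrable; fun_prop)]
        simp [hkb]
      have hsub := MeasureTheory.integral_sub hint1 hint2
      rw [hsub] at hD
      linarith
    have hC₁ : (∫ y in Set.Ioo a b, (Real.cos (k * (y - a)) * k) ^ 2)
        = (∫ y in Set.Ioo a b, Real.sin (k * (y - a)) ^ 2) * k ^ 2 := by
      simp_rw [mul_pow]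
      rw [MeasureTheory.integral_mul_const, hSC]
    -- nonnegativity
    have hA0 : 0 ≤ ∫ x in Set.Ioo (0:ℝ) h, Real.cosh (k * (x - h / 2)) ^ 2 :=
      setIntegral_nonneg measurableSet_Ioo fun x _ => sq_nonneg _
    have hB0 : 0 ≤ ∫ x in Set.Ioo (0:ℝ) h, (Real.sinh (k * (x - h / 2)) * k) ^ 2 :=
      setIntegral_nonneg measurableSet_Ioo fun x _ => sq_nonneg _
    have hS0 : 0 ≤ ∫ y in Set.Ioo a b, Real.sin (k * (y - a)) ^ 2 :=
      setIntegral_nonneg measurableSet_Ioo fun y _ => sq_nonneg _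
    -- pointwise bound
    have hBA : (∫ x in Set.Ioo (0:ℝ) h, (Real.sinh (k * (x - h / 2)) * k) ^ 2)
        ≤ (k ^ 2 * h) ^ 2 * ∫ x in Set.Ioo (0:ℝ) h, Real.cosh (k * (x - h / 2)) ^ 2 := by
      rw [show (k ^ 2 * h) ^ 2 * ∫ x in Set.Ioo (0:ℝ) h, Real.cosh (k * (x - h / 2)) ^ 2
        = ∫ x in Set.Ioo (0:ℝ) h, (k ^ 2 * h) ^ 2 * Real.cosh (k * (x - h / 2)) ^ 2
        from (MeasureTheory.integral_const_mul _ _).symm]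
      apply setIntegral_mono_on (contIntegOn (by fun_prop) 0 h)
        (contIntegOn (by fun_prop) 0 h) measurableSet_Ioo
      intro x hx
      have h1 := sinh_sq_le (k * (x - h / 2))
      have h2 : (k * (x - h / 2)) ^ 2 ≤ (k * h) ^ 2 := by
        obtain ⟨hx1, hx2⟩ := hx
        have f1 : (0:ℝ) < 3 * h / 2 - x := by linarith
        have f2 : (0:ℝ) < h / 2 + x := by linarith
        nlinarith [mul_pos f1 f2, sq_nonneg k]
      nlinarith [sq_nonneg (Real.cosh (k * (x - h / 2))), sq_nonneg k,
        mul_le_mul_of_nonneg_right h2 (sq_nonneg (Real.cosh (k * (x - h / 2)))),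
        mul_le_mul_of_nonneg_right h1 (sq_nonneg k)]
    rw [Isplit, Iu, I1, I2, hC₁]
    exact final_arith _ _ _ _ k h hh hA0 hB0 hS0 rfl hBA
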